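/- Let G be a finite non-trivial Cpo-group. Then there exists a prime p dividing |G| and a normal subgroup N of G of order p such that every nilpotent normal subgroup of G is contained in N; in other words, the Fitting subgroup F(G) of G has prime order p, equals O_p(G), and O_{p'}(G) = 1. -/

import Mathlib

/-- A group `G` is a Cpo-group if the centralizer of every non-trivial element
has prime order. -/
def IsCpoGroup (G : Type*) [Group G] : Prop :=
  ∀ x : G, x ≠ 1 → (Nat.card (Subgroup.centralizer ({x} : Set G))).Prime

section Aux

open Subgroup

variable {G : Type*} [Group G] [Finite G]

/-- A nontrivial subgroup of a prime-order subgroup equals it. -/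
lemma cpo_aux_eq_of_le_prime {H K : Subgroup G} (hle : H ≤ K)
    (hp : (Nat.card K).Prime) (hH : H ≠ ⊥) : H = K := by
  have hdvd := Subgroup.card_dvd_of_le hle
  have h1 : Nat.card H ≠ 1 := by rwa [ne_eq, Subgroup.card_eq_one]
  have hcard := (hp.eq_one_or_self_of_dvd _ hdvd).resolve_left h1
  exact Subgroup.eq_of_le_of_card_ge hle hcard.ge

/-- Subgroups of Cpo-groups are Cpo-groups. -/
lemma IsCpoGroup.subgroup (hG : IsCpoGroup G) (K : Subgroup G) : IsCpoGroup K := by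
  intro y hy
  have hy' : (y : G) ≠ 1 := fun h => hy (Subtype.ext h)
  have hq := hG (y : G) hy'
  set C : Subgroup K := Subgroup.centralizer ({y} : Set K) with hC
  have hmap : Subgroup.map K.subtype C ≤ Subgroup.centralizer ({(y : G)} : Set G) := by
    rintro _ ⟨c, hc, rfl⟩
    rw [Subgroup.mem_centralizer_singleton_iff]
    have := Subgroup.mem_centralizer_singleton_iff.mp hc
    exact congrArg Subtype.val this
  have hcardeq : Nat.card C = Nat.card (Subgroup.map K.subtype C) :=
    Nat.card_congr (Subgroup.equivMapOfInjective C K.subtype K.subtype_injective).toEquiv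
  have hdvd : Nat.card C ∣ Nat.card (Subgroup.centralizer ({(y : G)} : Set G)) := by
    rw [hcardeq]; exact Subgroup.card_dvd_of_le hmap
  have hne : Nat.card C ≠ 1 := by
    rw [ne_eq, Subgroup.card_eq_one]
    intro h
    have : y ∈ C := Subgroup.mem_centralizer_singleton_iff.mpr rfl
    rw [h, Subgroup.mem_bot] at this
    exact hy this
  have := (hq.eq_one_or_self_of_dvd _ hdvd).resolve_left hne
  rw [this]; exact hq

/-- A nontrivial nilpotent group has a nontrivial center. -/
lemma cpo_aux_nontrivial_center (H : Type*) [Group H] [Group.IsNilpotent H] [Nontrivial H] :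
    Nontrivial (Subgroup.center H) := by
  by_contra h
  have hc : Subgroup.center H = ⊥ :=
    (Subgroup.bot_or_nontrivial (Subgroup.center H)).resolve_right h
  have key : ∀ n, Subgroup.upperCentralSeries H n = ⊥ := by
    intro n
    induction n with
    | zero => exact Subgroup.upperCentralSeries_zero H
    | succ n ih =>
      rw [eq_bot_iff]
      intro x hx
      rw [Subgroup.mem_upperCentralSeries_succ_iff] at hx
      have hxc : x ∈ Subgroup.center H := by
        rw [Subgroup.mem_center_iff]
        intro g
        have := hx g
        rw [ih, Subgroup.mem_bot] at this
        have h1 : x * g * x⁻¹ * g⁻¹ = 1 := this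
        have h2 : x * g = g * x := by
          have h3 : x * g * (g * x)⁻¹ = 1 := by rw [mul_inv_rev, ← mul_assoc]; exact h1
          exact mul_inv_eq_one.mp h3
        rw [h2]
      rwa [hc] at hxc
  obtain ⟨n, hn⟩ := Group.IsNilpotent.nilpotent H
  obtain ⟨x, hx⟩ := exists_ne (1 : H)
  have : x ∈ (⊥ : Subgroup H) := by rw [← key n, hn]; trivial
  exact hx (Subgroup.mem_bot.mp this)

/-- Every finite Cpo-group is solvable. -/
lemma cpo_aux_solvable : ∀ (n : ℕ) (G : Type*) [Group G] [Finite G], Nat.card G = n →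
    IsCpoGroup G → Group.IsSolvable G := by
  intro n
  induction n using Nat.strong_induction_on with
  | _ n ih =>
    intro G _ _ hcard hG
    rcases eq_or_ne (Nat.card G) 1 with h1 | h1
    · have : Subsingleton G := by
        rw [Nat.card_eq_one_iff_unique] at h1
        exact h1.1
      infer_instance
    set p := (Nat.card G).minFac with hpdef
    have hp : p.Prime := Nat.minFac_prime h1
    haveI : Fact p.Prime := ⟨hp⟩
    obtain ⟨P⟩ : Nonempty (Sylow p G) := inferInstance
    have hPcard : Nat.card P = p ^ (Nat.card G).factorization p := P.card_eq_multiplicity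
    have hfac : (Nat.card G).factorization p ≠ 0 := by
      have hdvd : p ∣ Nat.card G := Nat.minFac_dvd _
      exact (hp.factorization_pos_of_dvd Nat.card_pos.ne' hdvd).ne'
    have hPne : Nat.card (P : Subgroup G) ≠ 1 := by
      rw [show Nat.card (P : Subgroup G) = Nat.card P from rfl, hPcard]
      exact (Nat.one_lt_pow hfac hp.one_lt).ne'
    have hPbot : (P : Subgroup G) ≠ ⊥ := fun h => hPne (by rw [h]; exact Subgroup.card_bot)
    haveI hPnt : Nontrivial (P : Subgroup G) := (Subgroup.nontrivial_iff_ne_bot _).mpr hPbot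
    -- find a nontrivial central element of P
    haveI := P.2.center_nontrivial
    obtain ⟨c, hc⟩ := exists_ne (1 : Subgroup.center (P : Subgroup G))
    set z : G := ((c : (P : Subgroup G)) : G) with hzdef
    have hz1 : z ≠ 1 := by
      intro h
      exact hc (Subtype.ext (Subtype.ext h))
    have hPle : (P : Subgroup G) ≤ Subgroup.centralizer ({z} : Set G) := by
      intro g hg
      rw [Subgroup.mem_centralizer_singleton_iff]
      have := Subgroup.mem_center_iff.mp c.2 ⟨g, hg⟩
      exact congrArg Subtype.val this
    have hq := hG z hz1
    have hPC : (P : Subgroup G) = Subgroup.centralizer ({z} : Set G) :=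
      cpo_aux_eq_of_le_prime hPle hq hPbot
    have hPp : Nat.card (P : Subgroup G) = p := by
      have h1 : Nat.card (P : Subgroup G) = Nat.card (Subgroup.centralizer ({z} : Set G)) := by
        rw [hPC]
      have h2 : (Nat.card (P : Subgroup G)).Prime := h1 ▸ hq
      rw [show Nat.card (P : Subgroup G) = Nat.card P from rfl, hPcard] at h2 ⊢
      have hd : p ∣ p ^ (Nat.card G).factorization p := dvd_pow_self p hfac
      exact ((Nat.prime_dvd_prime_iff_eq hp h2).mp hd).symm
    -- normalizer ≤ centralizer
    haveI : IsCyclic (P : Subgroup G) := isCyclic_of_prime_card hPp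
    have hNC : Subgroup.normalizer ((P : Subgroup G) : Set G) ≤ Subgroup.centralizer ((P : Subgroup G) : Set G) := by
      intro g hg
      rcases eq_or_ne g 1 with rfl | hg1
      · exact Subgroup.one_mem _
      have hmem : (⟨g, hg⟩ : Subgroup.normalizer ((P : Subgroup G) : Set G)) ∈
          (P : Subgroup G).normalizerMonoidHom.ker := by
        rw [MonoidHom.mem_ker]
        set φ := (P : Subgroup G).normalizerMonoidHom ⟨g, hg⟩ with hφ
        have hd1 : orderOf φ ∣ Nat.card (MulAut (P : Subgroup G)) := orderOf_dvd_natCard φ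
        rw [IsCyclic.card_mulAut, hPp, Nat.totient_prime hp] at hd1
        have hd2 : orderOf φ ∣ orderOf g := by
          have := orderOf_map_dvd (P : Subgroup G).normalizerMonoidHom
            (⟨g, hg⟩ : Subgroup.normalizer ((P : Subgroup G) : Set G))
          rwa [Subgroup.orderOf_mk] at this
        -- orderOf g is a prime ≥ p
        have hqg := hG g hg1
        have hog : orderOf g = Nat.card (Subgroup.centralizer ({g} : Set G)) := by
          have hle : Subgroup.zpowers g ≤ Subgroup.centralizer ({g} : Set G) := by
            rw [Subgroup.zpowers_le]
            exact Subgroup.mem_centralizer_singleton_iff.mpr rfl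
          have hbot : Subgroup.zpowers g ≠ ⊥ := by
            rw [ne_eq, Subgroup.zpowers_eq_bot]; exact hg1
          have := cpo_aux_eq_of_le_prime hle hqg hbot
          rw [← this, Nat.card_zpowers]
        have hogp : (orderOf g).Prime := hog ▸ hqg
        have hple : p ≤ orderOf g := by
          refine Nat.minFac_le_of_dvd hogp.two_le ?_
          exact orderOf_dvd_natCard g
        -- orderOf φ divides both p - 1 and orderOf g
        have hp2 := hp.two_le
        have h1 : orderOf φ = 1 := by
          rcases (hogp.eq_one_or_self_of_dvd _ hd2) with h | h
          · exact h
          · exfalso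
            have : orderOf g ≤ p - 1 := Nat.le_of_dvd (by omega) (h ▸ hd1)
            omega
        rw [orderOf_eq_one_iff] at h1
        exact h1
      rw [Subgroup.normalizerMonoidHom_ker, Subgroup.mem_subgroupOf] at hmem
      exact hmem
    -- Burnside's normal p-complement theorem
    set K := (MonoidHom.transferSylow P hNC).ker with hKdef
    have hcompl := MonoidHom.ker_transferSylow_isComplement' P hNC
    have hmul : Nat.card K * Nat.card (P : Subgroup G) = Nat.card G := hcompl.card_mul
    have hKpos : 0 < Nat.card K := Nat.card_pos
    have hKlt : Nat.card K < Nat.card G := by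
      rw [← hmul, hPp]
      have := hp.two_le
      nlinarith
    haveI : Group.IsSolvable K := by
      refine ih (Nat.card K) (hcard ▸ hKlt) K rfl ?_
      exact hG.subgroup K
    haveI : Group.IsSolvable (G ⧸ K) := by
      have hqcard : Nat.card (G ⧸ K) = p := by
        have h2 := Subgroup.card_eq_card_quotient_mul_card_subgroup K
        refine Nat.eq_of_mul_eq_mul_right hKpos ?_
        rw [← h2, ← hmul, hPp]; ring
      haveI : IsCyclic (G ⧸ K) := isCyclic_of_prime_card hqcard
      letI : CommGroup (G ⧸ K) := IsCyclic.commGroup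
      exact isSolvable_of_comm mul_comm
    refine solvable_of_ker_le_range K.subtype (QuotientGroup.mk' K) ?_
    rw [QuotientGroup.ker_mk', Subgroup.range_subtype]

end Aux

theorem stmt_10 (G : Type*) [Group G] [Finite G] (hG : IsCpoGroup G)
    (hnt : Nat.card G ≠ 1) :
    ∃ (p : ℕ) (N : Subgroup G), p.Prime ∧ p ∣ Nat.card G ∧ N.Normal ∧
      Nat.card N = p ∧
      ∀ M : Subgroup G, M.Normal → Group.IsNilpotent M → M ≤ N := by
  classical
  haveI : Nontrivial G := by
    rw [← Finite.one_lt_card_iff_nontrivial]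
    have := Nat.card_pos (α := G)
    omega
  haveI hsolv : IsSolvable G := cpo_aux_solvable (Nat.card G) G rfl hG
  have hex : ∃ j, derivedSeries G j = ⊥ := hsolv.solvable
  obtain ⟨n, hn, hmin⟩ : ∃ n, derivedSeries G n = ⊥ ∧ ∀ j < n, derivedSeries G j ≠ ⊥ :=
    ⟨Nat.find hex, Nat.find_spec hex, fun j hj => Nat.find_min hex hj⟩
  have hn0 : n ≠ 0 := by
    intro h
    rw [h, derivedSeries_zero] at hn
    obtain ⟨x, hx⟩ := exists_ne (1 : G)
    have : x ∈ (⊥ : Subgroup G) := hn ▸ Subgroup.mem_top x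
    exact hx (Subgroup.mem_bot.mp this)
  obtain ⟨m, rfl⟩ : ∃ m, n = m + 1 := ⟨n - 1, by omega⟩
  set A := derivedSeries G m with hAdef
  have hA : A ≠ ⊥ := hmin m (by omega)
  have hAA : ⁅A, A⁆ = ⊥ := hn
  haveI hAnorm : A.Normal := derivedSeries_normal G m
  have hcent : A ≤ Subgroup.centralizer (A : Set G) :=
    Subgroup.commutator_eq_bot_iff_le_centralizer.mp hAA
  obtain ⟨z, hzA, hz1⟩ := (Subgroup.nontrivial_iff_exists_ne_one A).mp
    ((Subgroup.nontrivial_iff_ne_bot A).mpr hA)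
  have hsub : ({z} : Set G) ⊆ (A : Set G) := Set.singleton_subset_iff.mpr hzA
  have hAz : A ≤ Subgroup.centralizer ({z} : Set G) :=
    hcent.trans (Subgroup.centralizer_le hsub)
  have hp := hG z hz1
  have hAeq : A = Subgroup.centralizer ({z} : Set G) := cpo_aux_eq_of_le_prime hAz hp hA
  refine ⟨Nat.card (Subgroup.centralizer ({z} : Set G)), A, hp, ?_, hAnorm, by rw [hAeq], ?_⟩
  · rw [← hAeq]
    exact Subgroup.card_subgroup_dvd_card A
  · intro M hMn hMnil
    rcases eq_or_ne M ⊥ with rfl | hM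
    · exact bot_le
    have h1 : ⁅M, A⁆ ≤ M ⊓ A := by
      haveI := hMn
      exact le_inf (Subgroup.commutator_le_left M A) (Subgroup.commutator_le_right M A)
    rcases eq_or_ne (M ⊓ A) ⊥ with hbot | hnbot
    · have hcb : ⁅M, A⁆ = ⊥ := le_bot_iff.mp (hbot ▸ h1)
      have hMle : M ≤ Subgroup.centralizer (A : Set G) :=
        Subgroup.commutator_eq_bot_iff_le_centralizer.mp hcb
      exact hMle.trans ((Subgroup.centralizer_le hsub).trans hAeq.symm.le)
    · have hcardA : (Nat.card A).Prime := by rw [hAeq]; exact hp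
      have hinf : M ⊓ A = A := cpo_aux_eq_of_le_prime inf_le_right hcardA hnbot
      have hAM : A ≤ M := by rw [← hinf]; exact inf_le_left
      haveI := hMnil
      haveI : Nontrivial M := (Subgroup.nontrivial_iff_ne_bot M).mpr hM
      haveI := cpo_aux_nontrivial_center M
      obtain ⟨c, hc⟩ := exists_ne (1 : Subgroup.center M)
      set z' : G := ((c : M) : G) with hz'def
      have hz'1 : z' ≠ 1 := fun h => hc (Subtype.ext (Subtype.ext h))
      have hMc : M ≤ Subgroup.centralizer ({z'} : Set G) := by
        intro g hg
        rw [Subgroup.mem_centralizer_singleton_iff]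
        have := Subgroup.mem_center_iff.mp c.2 ⟨g, hg⟩
        exact congrArg Subtype.val this
      have hq' := hG z' hz'1
      have hAeq' : A = Subgroup.centralizer ({z'} : Set G) :=
        cpo_aux_eq_of_le_prime (hAM.trans hMc) hq' hA
      rw [hAeq']
      exact hMc
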